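/- For a prime ℓ, the normalized Haar measure of {(x,y) ∈ ℤ_ℓ^× × ℤ_ℓ^× : v_ℓ(x-1) + v_ℓ(y-1) = n} equals (ℓ-2)²/(ℓ-1)² for n = 0, and (1/ℓⁿ)·(2(ℓ-2)/(ℓ-1) + n - 1) for n ≥ 1. -/

import Mathlib

open MeasureTheory
open scoped ENNReal

set_option linter.unusedSectionVars false


lemma meas_subgroup {G : Type*} [Group G] [MeasurableSpace G] [MeasurableMul G]
    (μ : Measure G) [μ.IsMulLeftInvariant] (hμ : μ Set.univ = 1)
    (H : Subgroup G) (hm : MeasurableSet (H : Set G)) (hf : H.index ≠ 0) :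
    μ (H : Set G) = (H.index : ℝ≥0∞)⁻¹ := by
  have hfin : Finite (G ⧸ H) := by
    rw [Subgroup.index_eq_card] at hf
    exact Nat.finite_of_card_ne_zero hf
  have := Fintype.ofFinite (G ⧸ H)
  have fiber_eq : ∀ q : G ⧸ H, (QuotientGroup.mk ⁻¹' {q} : Set G)
      = (fun x => (Quotient.out q)⁻¹ * x) ⁻¹' (H : Set G) := by
    intro q
    ext x
    simp only [Set.mem_preimage, Set.mem_singleton_iff, SetLike.mem_coe]
    conv_lhs => rw [← QuotientGroup.out_eq' q, eq_comm, QuotientGroup.eq]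
  have fiber_meas : ∀ q : G ⧸ H, μ (QuotientGroup.mk ⁻¹' {q} : Set G) = μ (H : Set G) := by
    intro q
    rw [fiber_eq q]
    exact measure_preimage_mul μ _ _
  have hunion : (Set.univ : Set G) = ⋃ q : G ⧸ H, QuotientGroup.mk ⁻¹' {q} := by
    ext x; simp
  have hdisj : Pairwise (Function.onFun Disjoint
      (fun q : G ⧸ H => (QuotientGroup.mk ⁻¹' {q} : Set G))) := by
    intro a b hab
    exact Set.disjoint_left.mpr (fun x hxa hxb => hab (hxa.symm.trans hxb))
  have hmq : ∀ q : G ⧸ H, MeasurableSet (QuotientGroup.mk ⁻¹' {q} : Set G) := by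
    intro q; rw [fiber_eq q]
    exact (measurable_const_mul _) hm
  have key : (H.index : ℝ≥0∞) * μ (H : Set G) = 1 := by
    have := measure_iUnion (μ := μ) hdisj hmq
    rw [← hunion, hμ] at this
    rw [tsum_eq_sum (s := Finset.univ) (by simp)] at this
    simp only [fiber_meas] at this
    rw [Finset.sum_const, nsmul_eq_mul] at this
    rw [Subgroup.index_eq_card, Nat.card_eq_fintype_card]
    exact this.symm
  have h1 : (H.index : ℝ≥0∞) ≠ 0 := by exact_mod_cast hf
  have h2 : (H.index : ℝ≥0∞) ≠ ⊤ := ENNReal.natCast_ne_top _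
  calc μ (H : Set G) = (H.index : ℝ≥0∞)⁻¹ * ((H.index : ℝ≥0∞) * μ (H : Set G)) := by
        rw [← mul_assoc, ENNReal.inv_mul_cancel h1 h2, one_mul]
    _ = (H.index : ℝ≥0∞)⁻¹ := by rw [key, mul_one]

section

variable (ℓ : ℕ) [Fact ℓ.Prime]

/-- The subgroup of principal units of level `k`. -/
noncomputable def padicUnitSub (k : ℕ) : Subgroup ℤ_[ℓ]ˣ :=
  (Units.map (PadicInt.toZModPow (p := ℓ) k).toMonoidHom).ker

lemma mem_padicUnitSub {k : ℕ} (u : ℤ_[ℓ]ˣ) :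
    u ∈ padicUnitSub ℓ k ↔ ‖(u : ℤ_[ℓ]) - 1‖ ≤ (ℓ : ℝ) ^ (-(k : ℤ)) := by
  rw [padicUnitSub, MonoidHom.mem_ker, Units.ext_iff,
    PadicInt.norm_le_pow_iff_mem_span_pow, ← PadicInt.ker_toZModPow, RingHom.mem_ker,
    map_sub, map_one, sub_eq_zero]
  simp [eq_comm]

lemma surj_unitsMap {k : ℕ} (hk : 1 ≤ k) :
    Function.Surjective (Units.map (PadicInt.toZModPow (p := ℓ) k).toMonoidHom) := by
  have hℓ : ℓ.Prime := Fact.out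
  intro v
  have : NeZero (ℓ ^ k) := ⟨pow_ne_zero _ hℓ.ne_zero⟩
  set m : ℕ := (v : ZMod (ℓ ^ k)).val with hm
  have hcop : Nat.Coprime m (ℓ ^ k) := ZMod.val_coe_unit_coprime v
  have hx : IsUnit ((m : ℤ_[ℓ])) := by
    rw [PadicInt.isUnit_iff]
    have h1 : ‖((m : ℤ) : ℤ_[ℓ])‖ ≤ 1 := PadicInt.norm_le_one _
    rcases lt_or_eq_of_le h1 with h | h
    · exfalso
      rw [PadicInt.norm_int_lt_one_iff_dvd] at h
      have : (ℓ : ℤ) ∣ (m : ℤ) := h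
      have hdvd : ℓ ∣ m := Int.ofNat_dvd.mp this
      have h2 : ℓ ∣ Nat.gcd m (ℓ ^ k) :=
        Nat.dvd_gcd hdvd (dvd_pow_self ℓ (by omega))
      rw [Nat.Coprime] at hcop
      rw [hcop] at h2
      exact absurd (Nat.le_of_dvd one_pos h2) (by have := hℓ.two_le; omega)
    · exact_mod_cast h
  refine ⟨hx.unit, ?_⟩
  ext
  simp only [Units.coe_map, RingHom.toMonoidHom_eq_coe, MonoidHom.coe_coe, IsUnit.unit_spec]
  rw [map_natCast]
  exact ZMod.natCast_zmod_val (v : ZMod (ℓ ^ k))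

lemma index_padicUnitSub {k : ℕ} (hk : 1 ≤ k) :
    (padicUnitSub ℓ k).index = (ℓ - 1) * ℓ ^ (k - 1) := by
  have hℓ : ℓ.Prime := Fact.out
  have : NeZero (ℓ ^ k) := ⟨pow_ne_zero _ hℓ.ne_zero⟩
  rw [padicUnitSub, Subgroup.index_ker,
    MonoidHom.range_eq_top.mpr (surj_unitsMap ℓ hk)]
  rw [Nat.card_congr Subgroup.topEquiv.toEquiv, Nat.card_eq_fintype_card,
    ZMod.card_units_eq_totient, Nat.totient_prime_pow hℓ (by omega)]
  ring

end

section
variable (ℓ : ℕ) [Fact ℓ.Prime]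

/-- level sets of the norm -/
def padicUnitA (k : ℕ) : Set ℤ_[ℓ]ˣ := {u | ‖(u : ℤ_[ℓ]) - 1‖ ≤ (ℓ : ℝ) ^ (-(k : ℤ))}

def padicUnitS (k : ℕ) : Set ℤ_[ℓ]ˣ := {u | ‖(u : ℤ_[ℓ]) - 1‖ = (ℓ : ℝ) ^ (-(k : ℤ))}

lemma padicUnitA_zero : padicUnitA ℓ 0 = Set.univ := by
  ext u
  simp [padicUnitA, PadicInt.norm_le_one]

lemma padicUnitS_eq_diff (k : ℕ) :
    padicUnitS ℓ k = padicUnitA ℓ k \ padicUnitA ℓ (k + 1) := by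
  have hc : (-((k:ℕ)+1) : ℤ) + 1 = -(k : ℤ) := by push_cast; ring
  ext u
  simp only [padicUnitS, padicUnitA, Set.mem_diff, Set.mem_setOf_eq]
  have hiff : (‖(u : ℤ_[ℓ]) - 1‖ ≤ (ℓ:ℝ) ^ (-((k+1:ℕ)) : ℤ)) ↔ ‖(u : ℤ_[ℓ]) - 1‖ < (ℓ:ℝ) ^ (-(k:ℤ)) := by
    rw [PadicInt.norm_le_pow_iff_norm_lt_pow_add_one]
    push_cast
    rw [hc]
  rw [hiff, not_lt]
  constructor
  · intro h
    exact ⟨le_of_eq h, le_of_eq h.symm⟩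
  · rintro ⟨h1, h2⟩
    exact le_antisymm h1 h2

variable [MeasurableSpace ℤ_[ℓ]ˣ] [BorelSpace ℤ_[ℓ]ˣ]

lemma continuous_padic_norm_sub_one :
    Continuous (fun u : ℤ_[ℓ]ˣ => ‖(u : ℤ_[ℓ]) - 1‖) :=
  (Units.continuous_val.sub continuous_const).norm

lemma measurable_padicUnitA (k : ℕ) : MeasurableSet (padicUnitA ℓ k) :=
  (continuous_padic_norm_sub_one ℓ).measurable measurableSet_Iic

lemma measurable_padicUnitS (k : ℕ) : MeasurableSet (padicUnitS ℓ k) :=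
  (continuous_padic_norm_sub_one ℓ).measurable (measurableSet_singleton _)
end

section
variable (ℓ : ℕ) [Fact ℓ.Prime] [MeasurableSpace ℤ_[ℓ]ˣ] [BorelSpace ℤ_[ℓ]ˣ]
  (μ : Measure ℤ_[ℓ]ˣ) [μ.IsMulLeftInvariant]

lemma padicUnitA_antitone {j k : ℕ} (hjk : j ≤ k) : padicUnitA ℓ k ⊆ padicUnitA ℓ j := by
  intro u hu
  have h2 := (Fact.out : ℓ.Prime).two_le
  have hb : (1 : ℝ) ≤ (ℓ : ℝ) := by exact_mod_cast (by omega : 1 ≤ ℓ)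
  have hmono : ((ℓ : ℝ)) ^ (-(k : ℤ)) ≤ ((ℓ : ℝ)) ^ (-(j : ℤ)) :=
    zpow_le_zpow_right₀ hb (by omega)
  exact le_trans hu hmono

lemma meas_padicUnitA_pos (hμ : μ Set.univ = 1) {k : ℕ} (hk : 1 ≤ k) :
    μ (padicUnitA ℓ k) = (((ℓ - 1) * ℓ ^ (k - 1) : ℕ) : ℝ≥0∞)⁻¹ := by
  have h2 := (Fact.out : ℓ.Prime).two_le
  have hset : padicUnitA ℓ k = ((padicUnitSub ℓ k : Subgroup ℤ_[ℓ]ˣ) : Set ℤ_[ℓ]ˣ) := by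
    ext u; rw [SetLike.mem_coe, mem_padicUnitSub ℓ]; rfl
  have hf : (padicUnitSub ℓ k).index ≠ 0 := by
    rw [index_padicUnitSub ℓ hk]
    exact Nat.mul_ne_zero (by omega) (pow_ne_zero _ (by omega))
  rw [hset, meas_subgroup μ hμ _ (hset ▸ measurable_padicUnitA ℓ k) hf, index_padicUnitSub ℓ hk]

lemma meas_padicUnitS (hμ : μ Set.univ = 1) (k : ℕ) :
    μ (padicUnitS ℓ k) = if k = 0 then ((ℓ - 2 : ℕ) : ℝ≥0∞) / ((ℓ - 1 : ℕ) : ℝ≥0∞)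
      else (((ℓ : ℝ≥0∞)) ^ k)⁻¹ := by
  have h2 := (Fact.out : ℓ.Prime).two_le
  have : IsFiniteMeasure μ := ⟨by rw [hμ]; exact ENNReal.one_lt_top⟩
  have hd1 : ((ℓ - 1 : ℕ) : ℝ≥0∞) ≠ 0 := by exact_mod_cast (by omega : ℓ - 1 ≠ 0)
  rw [padicUnitS_eq_diff, measure_diff (padicUnitA_antitone ℓ (Nat.le_succ k))
    (measurable_padicUnitA ℓ (k + 1)).nullMeasurableSet (measure_ne_top μ _)]
  rcases Nat.eq_zero_or_pos k with rfl | hk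
  · rw [padicUnitA_zero, hμ, meas_padicUnitA_pos ℓ μ hμ le_rfl, if_pos rfl]
    simp only [Nat.sub_self, pow_zero, mul_one]
    refine ENNReal.sub_eq_of_eq_add (ENNReal.inv_ne_top.mpr hd1) ?_
    have h1d : ((ℓ - 1 : ℕ) : ℝ≥0∞)⁻¹ = 1 / ((ℓ - 1 : ℕ) : ℝ≥0∞) := (one_div _).symm
    rw [h1d, ENNReal.div_add_div_same]
    have hcast : ((ℓ - 2 : ℕ) : ℝ≥0∞) + 1 = ((ℓ - 1 : ℕ) : ℝ≥0∞) := by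
      exact_mod_cast congrArg (Nat.cast (R := ℝ≥0∞)) (by omega : ℓ - 2 + 1 = ℓ - 1)
    rw [hcast, ENNReal.div_self hd1 (ENNReal.natCast_ne_top _)]
  · rw [meas_padicUnitA_pos ℓ μ hμ hk, meas_padicUnitA_pos ℓ μ hμ (by omega),
      if_neg (by omega), Nat.succ_sub_one]
    have hne : ∀ m : ℕ, m ≠ 0 → (((m : ℕ) : ℝ≥0∞))⁻¹ ≠ ⊤ := fun m hm =>
      ENNReal.inv_ne_top.mpr (by exact_mod_cast hm)
    refine ENNReal.sub_eq_of_eq_add (hne _ (Nat.mul_ne_zero (by omega) (pow_ne_zero _ (by omega)))) ?_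
    rw [← ENNReal.toReal_eq_toReal_iff' (hne _ (Nat.mul_ne_zero (by omega) (pow_ne_zero _ (by omega))))
      (by
        refine ENNReal.add_ne_top.mpr ⟨?_, hne _ (Nat.mul_ne_zero (by omega) (pow_ne_zero _ (by omega)))⟩
        exact ENNReal.inv_ne_top.mpr (by positivity))]
    rw [ENNReal.toReal_add (ENNReal.inv_ne_top.mpr (by positivity))
      (hne _ (Nat.mul_ne_zero (by omega) (pow_ne_zero _ (by omega))))]
    simp only [ENNReal.toReal_inv, ENNReal.toReal_natCast, ENNReal.toReal_pow]
    push_cast [Nat.cast_sub (by omega : 1 ≤ ℓ)]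
    have hpow : (ℓ : ℝ) ^ k = (ℓ : ℝ) ^ (k - 1) * ℓ := by
      conv_lhs => rw [show k = (k - 1) + 1 by omega]
      rw [pow_succ]
    rw [hpow]
    have hx : (ℓ : ℝ) ^ (k - 1) ≠ 0 := by positivity
    have hl : (ℓ : ℝ) ≠ 0 := by positivity
    have hc : (ℓ : ℝ) - 1 ≠ 0 := by
      have : (2 : ℝ) ≤ (ℓ : ℝ) := by exact_mod_cast h2
      linarith
    field_simp
    ring

end

/-- For the product of normalized Haar measures on `ℤ_ℓ^× × ℤ_ℓ^×`, the measure of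
`{(x,y) : v_ℓ(x-1) + v_ℓ(y-1) = n}` (expressed via the `ℓ`-adic norm, the
condition being `‖x-1‖·‖y-1‖ = ℓ⁻ⁿ`) equals `((ℓ-2)/(ℓ-1))²` for `n = 0`, and
`ℓ⁻ⁿ (2(ℓ-2)/(ℓ-1) + n - 1)` for `n ≥ 1`. -/

theorem haar_prod_padic_units_valuation_sum (ℓ : ℕ) [Fact ℓ.Prime]
    [MeasurableSpace ℤ_[ℓ]ˣ] [BorelSpace ℤ_[ℓ]ˣ]
    (μ : Measure ℤ_[ℓ]ˣ) [μ.IsMulLeftInvariant] [SigmaFinite μ]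
    (hμ : μ Set.univ = 1) (n : ℕ) :
    (μ.prod μ) {p : ℤ_[ℓ]ˣ × ℤ_[ℓ]ˣ |
        ‖(p.1 : ℤ_[ℓ]) - 1‖ * ‖(p.2 : ℤ_[ℓ]) - 1‖ = (ℓ : ℝ) ^ (-(n : ℤ))}
      = if n = 0 then (((ℓ : ℝ≥0∞) - 2) / ((ℓ : ℝ≥0∞) - 1)) ^ 2
        else ((ℓ : ℝ≥0∞) ^ n)⁻¹ *
          (2 * ((ℓ : ℝ≥0∞) - 2) / ((ℓ : ℝ≥0∞) - 1) + (n : ℝ≥0∞) - 1) := by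
  have hℓ : ℓ.Prime := Fact.out
  have h2 := hℓ.two_le
  have hℓR : (1 : ℝ) < (ℓ : ℝ) := by exact_mod_cast hℓ.one_lt
  have hℓ0 : (ℓ : ℝ) ≠ 0 := by positivity
  have hinj : ∀ {a b : ℤ}, ((ℓ:ℝ) ^ a = (ℓ:ℝ) ^ b) → a = b :=
    fun hab => zpow_right_injective₀ (by positivity) (ne_of_gt hℓR) hab
  -- the set decomposition
  have hset : {p : ℤ_[ℓ]ˣ × ℤ_[ℓ]ˣ |
        ‖(p.1 : ℤ_[ℓ]) - 1‖ * ‖(p.2 : ℤ_[ℓ]) - 1‖ = (ℓ : ℝ) ^ (-(n : ℤ))}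
      = ⋃ k ∈ Finset.range (n + 1), (padicUnitS ℓ k) ×ˢ (padicUnitS ℓ (n - k)) := by
    ext p
    simp only [Set.mem_setOf_eq, Set.mem_iUnion, Finset.mem_range, Set.mem_prod, padicUnitS]
    constructor
    · intro h
      have hpos : (0 : ℝ) < (ℓ : ℝ) ^ (-(n : ℤ)) := by positivity
      have hpow : (0:ℝ) < (ℓ:ℝ) ^ n := by positivity
      have hx : ((p.1 : ℤ_[ℓ]) - 1) ≠ 0 := by
        intro h0; rw [h0] at h; simp at h; linarith
      have hy : ((p.2 : ℤ_[ℓ]) - 1) ≠ 0 := by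
        intro h0; rw [h0] at h; simp at h; linarith
      have hv1 := PadicInt.norm_eq_zpow_neg_valuation hx
      have hv2 := PadicInt.norm_eq_zpow_neg_valuation hy
      set v1 := ((p.1 : ℤ_[ℓ]) - 1).valuation with hv1d
      set v2 := ((p.2 : ℤ_[ℓ]) - 1).valuation with hv2d
      have hval1 : 0 ≤ v1 := Nat.zero_le _
      have hval2 : 0 ≤ v2 := Nat.zero_le _
      rw [hv1, hv2, ← zpow_add₀ hℓ0] at h
      have hsum : v1 + v2 = (n : ℤ) := by
        have := hinj h; omega
      refine ⟨v1, by omega, ?_, ?_⟩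
      · rw [hv1]
      · rw [hv2]; congr 1; omega
    · rintro ⟨k, hk, h1, h2⟩
      rw [h1, h2, ← zpow_add₀ hℓ0]
      congr 1
      have : (↑(n - k) : ℤ) = (n : ℤ) - k := by omega
      omega
  rw [hset]
  -- measure of the union
  have hdisjoint : Set.PairwiseDisjoint (↑(Finset.range (n + 1)))
      (fun k => (padicUnitS ℓ k) ×ˢ (padicUnitS ℓ (n - k))) := by
    intro a _ b _ hab
    refine Set.disjoint_left.mpr ?_
    rintro p ⟨hpa, _⟩ ⟨hpb, _⟩
    exact hab (by
      have := hpa.symm.trans hpb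
      have := hinj this
      omega)
  rw [show (⋃ k ∈ Finset.range (n + 1), (padicUnitS ℓ k) ×ˢ (padicUnitS ℓ (n - k)))
      = ⋃ k ∈ Finset.range (n + 1), (padicUnitS ℓ k) ×ˢ (padicUnitS ℓ (n - k)) from rfl,
    measure_biUnion_finset hdisjoint
      (fun k _ => (measurable_padicUnitS ℓ k).prod (measurable_padicUnitS ℓ (n - k)))]
  simp only [Measure.prod_prod, meas_padicUnitS ℓ μ hμ]
  -- now pure arithmetic
  rcases Nat.eq_zero_or_pos n with rfl | hn
  · simp only [Finset.range_one, Finset.sum_singleton, if_pos rfl, Nat.sub_zero]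
    rw [ENNReal.natCast_sub, ENNReal.natCast_sub]
    norm_num [sq]
  · obtain ⟨m, rfl⟩ : ∃ m, n = m + 1 := ⟨n - 1, by omega⟩
    rw [if_neg (by omega)]
    rw [Finset.sum_range_succ, Finset.sum_range_succ']
    have hmid : ∀ i ∈ Finset.range m,
        (if i + 1 = 0 then ((ℓ - 2 : ℕ) : ℝ≥0∞) / ((ℓ - 1 : ℕ) : ℝ≥0∞) else ((ℓ : ℝ≥0∞) ^ (i+1))⁻¹)
          * (if m + 1 - (i + 1) = 0 then ((ℓ - 2 : ℕ) : ℝ≥0∞) / ((ℓ - 1 : ℕ) : ℝ≥0∞)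
              else ((ℓ : ℝ≥0∞) ^ (m + 1 - (i + 1)))⁻¹)
        = ((ℓ : ℝ≥0∞) ^ (m + 1))⁻¹ := by
      intro i hi
      rw [Finset.mem_range] at hi
      rw [if_neg (by omega), if_neg (by omega), ← ENNReal.mul_inv (by left; positivity)
        (by left; exact ENNReal.pow_ne_top (ENNReal.natCast_ne_top ℓ)), ← pow_add]
      congr 2
      omega
    rw [Finset.sum_congr rfl hmid, Finset.sum_const, Finset.card_range, nsmul_eq_mul]
    rw [if_pos rfl, if_neg (by omega), if_neg (by omega), if_pos (by omega)]
    have hsub : m + 1 - 0 = m + 1 := by omega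
    rw [hsub]
    -- RHS simplification of the truncated subtraction
    have hcast : ((m + 1 : ℕ) : ℝ≥0∞) = (m : ℝ≥0∞) + 1 := by push_cast; ring
    rw [hcast, ← add_assoc, ENNReal.add_sub_cancel_right ENNReal.one_ne_top]
    have e2 : ((ℓ : ℝ≥0∞) - 2) = ((ℓ - 2 : ℕ) : ℝ≥0∞) := by
      rw [ENNReal.natCast_sub]; norm_num
    have e1 : ((ℓ : ℝ≥0∞) - 1) = ((ℓ - 1 : ℕ) : ℝ≥0∞) := by
      rw [ENNReal.natCast_sub]; norm_num
    rw [e2, e1]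
    simp only [div_eq_mul_inv]
    ring
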